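/- Let S be an idempotent semifield, A ∈ M_n(S) with all entries nonzero, and b a regular n-vector. Suppose a_{ik} ⊗ a_{kk}⁻¹ ≤ b_i ⊗ b_k⁻¹ for all 2 ≤ i ≤ n, 1 ≤ k ≤ i−1, and a_{ik} ⊗ a_{kk}⁻¹ ≤ b_i ⊗ b_k⁻¹ for all 1 ≤ i ≤ n−1, k > i. Then for each k, b_k ⊗ a_{kk}⁻¹ = min_i (b_i ⊗ a_{ik}⁻¹), i.e., the k-th column minimum of the matrix (b_i ⊗ a_{ij}⁻¹) is attained at i = k. -/

import Mathlib

/-- Key lemma: `x ⊗ y⁻¹ ≤ u ⊗ v⁻¹` implies `v ⊗ y⁻¹ ≤ u ⊗ x⁻¹`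
(multiply both sides by `v ⊗ x⁻¹`). -/
lemma key_stmt_18 {S : Type*} [Semifield S] {x y u v : S} (hx : x ≠ 0) (hy : y ≠ 0)
    (hv : v ≠ 0) (h : x * y⁻¹ + u * v⁻¹ = u * v⁻¹) :
    v * y⁻¹ + u * x⁻¹ = u * x⁻¹ := by
  calc v * y⁻¹ + u * x⁻¹ = (x * y⁻¹ + u * v⁻¹) * (v * x⁻¹) := by
        field_simp
    _ = u * v⁻¹ * (v * x⁻¹) := by rw [h]
    _ = u * x⁻¹ := by field_simp

/-- Under the `LU`-type inequalities `a_{ik} ⊗ a_{kk}⁻¹ ≤ b_i ⊗ b_k⁻¹` (for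
`k < i` and for `k > i`), the `k`-th column minimum of the matrix
`(b_i ⊗ a_{ij}⁻¹)` is attained at `i = k`, i.e. equals `b_k ⊗ a_{kk}⁻¹`.
The order is `a ≤ b ↔ a + b = b`. -/
theorem stmt_18 {S : Type*} [Semifield S] (hid : ∀ a : S, a + a = a)
    (htot : ∀ a b : S, a + b = b ∨ b + a = a) {n : ℕ}
    (A : Matrix (Fin n) (Fin n) S) (hA : ∀ i j, A i j ≠ 0)
    (b : Fin n → S) (hb : ∀ i, b i ≠ 0)
    (hlow : ∀ i k : Fin n, k < i →
      A i k * (A k k)⁻¹ + b i * (b k)⁻¹ = b i * (b k)⁻¹)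
    (hupp : ∀ i k : Fin n, i < k →
      A i k * (A k k)⁻¹ + b i * (b k)⁻¹ = b i * (b k)⁻¹) :
    ∀ k i : Fin n, b k * (A k k)⁻¹ + b i * (A i k)⁻¹ = b i * (A i k)⁻¹ := by
  intro k i
  rcases lt_trichotomy i k with h | h | h
  · exact key_stmt_18 (hA i k) (hA k k) (hb k) (hupp i k h)
  · subst h; exact hid _
  · exact key_stmt_18 (hA i k) (hA k k) (hb k) (hlow i k h)
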